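/- If a graph G has an error-correcting identifying code, then G has no two adjacent vertices both of degree 2. -/
import Mathlib


open SimpleGraph

variable {V : Type*}

/-- Closed neighborhood of `v` in `G`. -/
def closedNbhd (G : SimpleGraph V) (v : V) : Set V := insert v (G.neighborSet v)

/-- `S` is an error-correcting identifying code for `G`: every vertex is 3-dominated
and every pair of distinct vertices is 3-distinguished. -/
def IsErrIC (G : SimpleGraph V) (S : Set V) : Prop :=
  (∀ v : V, 3 ≤ (closedNbhd G v ∩ S).ncard) ∧
  ∀ u v : V, u ≠ v → 3 ≤ (symmDiff (closedNbhd G u ∩ S) (closedNbhd G v ∩ S)).ncard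

/-- `G` has no closed twins and no open twins. -/
def TwinFree (G : SimpleGraph V) : Prop :=
  ∀ u v : V, u ≠ v →
    closedNbhd G u ≠ closedNbhd G v ∧ G.neighborSet u ≠ G.neighborSet v

lemma closedNbhd_ncard [Fintype V] (G : SimpleGraph V) (v : V) :
    (closedNbhd G v).ncard = (G.neighborSet v).ncard + 1 := by
  rw [closedNbhd, Set.ncard_insert_of_notMem (by simp) (Set.toFinite _)]

theorem stmt3 [Fintype V] (G : SimpleGraph V) (h : ∃ S : Set V, IsErrIC G S) :
    ∀ u v : V, G.Adj u v →
      ¬((G.neighborSet u).ncard = 2 ∧ (G.neighborSet v).ncard = 2) := by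
  classical
  rintro u v hadj ⟨hu2, hv2⟩
  obtain ⟨S, hdom, hsep⟩ := h
  have hne : u ≠ v := hadj.ne
  have hcu : (closedNbhd G u).ncard = 3 := by rw [closedNbhd_ncard, hu2]
  have hcv : (closedNbhd G v).ncard = 3 := by rw [closedNbhd_ncard, hv2]
  have hequ : closedNbhd G u ∩ S = closedNbhd G u :=
    Set.eq_of_subset_of_ncard_le Set.inter_subset_left (by rw [hcu]; exact hdom u)
      (Set.toFinite _)
  have heqv : closedNbhd G v ∩ S = closedNbhd G v :=
    Set.eq_of_subset_of_ncard_le Set.inter_subset_left (by rw [hcv]; exact hdom v)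
      (Set.toFinite _)
  have hkey := hsep u v hne
  rw [hequ, heqv] at hkey
  -- u and v belong to both closed neighborhoods
  have huu : u ∈ closedNbhd G u := Set.mem_insert _ _
  have hvv : v ∈ closedNbhd G v := Set.mem_insert _ _
  have huv : u ∈ closedNbhd G v := Set.mem_insert_of_mem _ (by simpa using hadj.symm)
  have hvu : v ∈ closedNbhd G u := Set.mem_insert_of_mem _ (by simpa using hadj)
  have hsub : symmDiff (closedNbhd G u) (closedNbhd G v) ⊆
      (closedNbhd G u \ {u, v}) ∪ (closedNbhd G v \ {u, v}) := by
    intro x hx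
    rcases hx with hx | hx
    · left
      refine ⟨hx.1, ?_⟩
      rintro (rfl | rfl)
      · exact hx.2 huv
      · exact hx.2 hvv
    · right
      refine ⟨hx.1, ?_⟩
      rintro (rfl | rfl)
      · exact hx.2 huu
      · exact hx.2 hvu
  have hpair : ({u, v} : Set V).ncard = 2 := Set.ncard_pair hne
  have hdu : (closedNbhd G u \ {u, v}).ncard = 1 := by
    rw [Set.ncard_diff (by rintro x (rfl | rfl); exacts [huu, hvu]) (Set.toFinite _),
      hpair, hcu]
  have hdv : (closedNbhd G v \ {u, v}).ncard = 1 := by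
    rw [Set.ncard_diff (by rintro x (rfl | rfl); exacts [huv, hvv]) (Set.toFinite _),
      hpair, hcv]
  have hle : (symmDiff (closedNbhd G u) (closedNbhd G v)).ncard ≤ 2 := by
    calc (symmDiff (closedNbhd G u) (closedNbhd G v)).ncard
        ≤ ((closedNbhd G u \ {u, v}) ∪ (closedNbhd G v \ {u, v})).ncard :=
          Set.ncard_le_ncard hsub (Set.toFinite _)
      _ ≤ (closedNbhd G u \ {u, v}).ncard + (closedNbhd G v \ {u, v}).ncard :=
          Set.ncard_union_le _ _
      _ = 2 := by rw [hdu, hdv]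
  omega
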